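/- For the updown category of necklaces with c colors, the object generating function is O(t) = 1 − log(1 − ct) and the morphism generating function is M(t) = ct/(1 − ct²). -/

import Mathlib

/-- The rotation (orbit) relation on colorings of `ZMod m` by `c` colors:
`g` is a rotation of `f`. -/
def NeckRel (c m : ℕ) : (ZMod m → Fin c) → (ZMod m → Fin c) → Prop :=
  fun f g => ∃ k : ZMod m, ∀ i, g i = f (i + k)

/-- Necklaces with `m` beads in `c` colors. -/
def Neck (c m : ℕ) := Quot (NeckRel c m)

/-- The order of the automorphism group (rotational stabilizer) of a coloring. -/
noncomputable def neckStab {c m : ℕ} (f : ZMod m → Fin c) : ℕ :=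
  Nat.card {k : ZMod m // ∀ i, f (i + k) = f i}

/-- The coefficients of the object generating function of the updown category of
necklaces: `a_m = Σ_{necklaces with m beads} 1/|Aut|` (with `a_0 = 1`, the empty
necklace having trivial automorphism group). -/
noncomputable def neckCoeff (c : ℕ) : ℕ → ℚ :=
  fun m => if m = 0 then 1 else ∑ᶠ ω : Neck c m, ((neckStab (Quot.out ω) : ℚ))⁻¹

/-- The object generating function of the updown category of necklaces. -/
noncomputable def neckO (c : ℕ) : PowerSeries ℚ := PowerSeries.mk (neckCoeff c)

/-- The morphism generating function of the updown category of necklaces: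
since the category is factorial (evenly down-covered with `d_m = m`),
`M(t) = Σ_{m ≥ 1} a_m · m · t^(2m-1)`. -/
noncomputable def neckM (c : ℕ) : PowerSeries ℚ :=
  PowerSeries.mk fun n =>
    if n % 2 = 1 then neckCoeff c ((n + 1) / 2) * (((n + 1) / 2 : ℕ) : ℚ) else 0

/-! ### Auxiliary lemmas -/

/-- The rotation action of `ZMod m` on colorings. -/
instance neckVAdd (c m : ℕ) : VAdd (ZMod m) (ZMod m → Fin c) :=
  ⟨fun k f => fun i => f (i + k)⟩

instance neckAddAction (c m : ℕ) : AddAction (ZMod m) (ZMod m → Fin c) where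
  zero_vadd f := funext fun i => by show f (i + 0) = f i; rw [add_zero]
  add_vadd k l f := funext fun i => by
    show f (i + (k + l)) = f (i + k + l); rw [add_assoc]

lemma neckRel_iff_mem_orbit (c m : ℕ) (f g : ZMod m → Fin c) :
    NeckRel c m f g ↔ g ∈ AddAction.orbit (ZMod m) f := by
  rw [AddAction.mem_orbit_iff]
  constructor
  · rintro ⟨k, hk⟩
    exact ⟨k, funext fun i => (hk i).symm⟩
  · rintro ⟨k, rfl⟩
    exact ⟨k, fun i => rfl⟩

lemma neckRel_equivalence (c m : ℕ) : Equivalence (NeckRel c m) := by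
  constructor
  · intro f; exact ⟨0, fun i => by rw [add_zero]⟩
  · rintro f g ⟨k, hk⟩
    refine ⟨-k, fun i => ?_⟩
    rw [hk (i + -k)]; congr 1; ring
  · rintro f g h ⟨k, hk⟩ ⟨k', hk'⟩
    refine ⟨k' + k, fun i => ?_⟩
    rw [hk' i, hk (i + k')]; congr 1; ring

lemma neck_mk_eq (c m : ℕ) (f g : ZMod m → Fin c) :
    Quot.mk (NeckRel c m) f = Quot.mk (NeckRel c m) g ↔ NeckRel c m f g := by
  rw [Quot.eq, (neckRel_equivalence c m).eqvGen_iff]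

lemma neckStab_eq_card_stabilizer {c m : ℕ} (f : ZMod m → Fin c) :
    neckStab f = Nat.card (AddAction.stabilizer (ZMod m) f) := by
  apply Nat.card_congr
  apply Equiv.subtypeEquivRight
  intro k
  constructor
  · intro h
    show k +ᵥ f = f
    exact funext h
  · intro h i
    exact congrFun h i

/-- Burnside-style count: `Σ_{necklaces} 1/|Aut| = c^m / m` for `m ≥ 1`. -/
lemma neckCoeff_eq (c m : ℕ) (hm : m ≠ 0) :
    neckCoeff c m = (c : ℚ) ^ m / (m : ℚ) := by
  classical
  haveI : NeZero m := ⟨hm⟩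
  have hmq : (m : ℚ) ≠ 0 := Nat.cast_ne_zero.mpr hm
  haveI : Finite (Neck c m) :=
    Finite.of_surjective (Quot.mk (NeckRel c m)) (fun q => Quot.exists_rep q)
  letI : Fintype (Neck c m) := Fintype.ofFinite _
  rw [neckCoeff]
  rw [if_neg hm, finsum_eq_sum_of_fintype]
  -- per-class identity: `1/|stab(ω)| = |class ω| / m` (orbit–stabilizer)
  have key : ∀ ω : Neck c m, ((neckStab (Quot.out ω) : ℚ))⁻¹ =
      (Fintype.card {g : ZMod m → Fin c // Quot.mk (NeckRel c m) g = ω} : ℚ) / m := by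
    intro ω
    set f := Quot.out ω with hf
    have horb : Fintype.card (AddAction.orbit (ZMod m) f) *
        Fintype.card (AddAction.stabilizer (ZMod m) f) = m := by
      rw [AddAction.card_orbit_mul_card_stabilizer_eq_card_addGroup (ZMod m) f, ZMod.card]
    have hfiber : Fintype.card {g : ZMod m → Fin c // Quot.mk (NeckRel c m) g = ω} =
        Fintype.card (AddAction.orbit (ZMod m) f) := by
      apply Fintype.card_congr
      apply Equiv.subtypeEquivRight
      intro g
      rw [← Quot.out_eq ω, neck_mk_eq]
      constructor
      · intro h
        exact (neckRel_iff_mem_orbit c m f g).mp ((neckRel_equivalence c m).symm h)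
      · intro h
        exact (neckRel_equivalence c m).symm ((neckRel_iff_mem_orbit c m f g).mpr h)
    have hstab : neckStab f = Fintype.card (AddAction.stabilizer (ZMod m) f) := by
      rw [neckStab_eq_card_stabilizer, Nat.card_eq_fintype_card]
    have hS : (neckStab f : ℚ) ≠ 0 := by
      rw [hstab]
      exact_mod_cast Fintype.card_ne_zero
    rw [hfiber, hstab]
    have hq : (Fintype.card (AddAction.orbit (ZMod m) f) : ℚ) *
        (Fintype.card (AddAction.stabilizer (ZMod m) f) : ℚ) = m := by
      exact_mod_cast horb
    rw [hstab] at hS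
    rw [eq_div_iff hmq, ← hq, mul_comm (Fintype.card (AddAction.orbit (ZMod m) f) : ℚ),
      ← mul_assoc, inv_mul_cancel₀ hS, one_mul]
  rw [Finset.sum_congr rfl (fun ω _ => key ω), ← Finset.sum_div]
  congr 1
  have : ∑ ω : Neck c m,
      (Fintype.card {g : ZMod m → Fin c // Quot.mk (NeckRel c m) g = ω}) =
      Fintype.card (ZMod m → Fin c) := by
    rw [← Fintype.card_sigma]
    exact Fintype.card_congr (Equiv.sigmaFiberEquiv (Quot.mk (NeckRel c m)))
  rw [← Nat.cast_sum, this]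
  rw [Fintype.card_fun, Fintype.card_fin, ZMod.card]
  push_cast
  ring

lemma neckM_coeff (c n : ℕ) :
    PowerSeries.coeff n (neckM c) =
      if n % 2 = 1 then (c : ℚ) ^ ((n + 1) / 2) else 0 := by
  rw [neckM, PowerSeries.coeff_mk]
  by_cases h : n % 2 = 1
  · rw [if_pos h, if_pos h]
    have hk : (n + 1) / 2 ≠ 0 := by omega
    have hkq : (((n + 1) / 2 : ℕ) : ℚ) ≠ 0 := Nat.cast_ne_zero.mpr hk
    rw [neckCoeff_eq c _ hk, div_mul_cancel₀ _ hkq]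
  · rw [if_neg h, if_neg h]

/-- For the updown category of necklaces with `c` colors, the object generating
function is `O(t) = 1 − log(1 − ct)`, i.e. has coefficients `1, c, c²/2, c³/3, …`,
and the morphism generating function is `M(t) = ct/(1 − ct²)`. -/
theorem necklace_generating_functions (c : ℕ) :
    (∀ n : ℕ, PowerSeries.coeff n (neckO c) =
      if n = 0 then 1 else (c : ℚ) ^ n / (n : ℚ)) ∧
    (1 - PowerSeries.C (c : ℚ) * PowerSeries.X ^ 2) * neckM c =
      PowerSeries.C (c : ℚ) * PowerSeries.X := by
  constructor
  · intro n
    rw [neckO, PowerSeries.coeff_mk]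
    by_cases h : n = 0
    · rw [if_pos h]; simp [neckCoeff, h]
    · rw [if_neg h]; exact neckCoeff_eq c n h
  · ext n
    rw [sub_mul, one_mul, map_sub, mul_assoc, PowerSeries.coeff_C_mul,
      PowerSeries.coeff_X_pow_mul']
    rw [PowerSeries.coeff_C_mul, PowerSeries.coeff_X, neckM_coeff]
    by_cases h : n % 2 = 1
    · rw [if_pos h]
      by_cases h1 : n = 1
      · subst h1
        norm_num
      · have h2 : 2 ≤ n := by omega
        rw [if_pos h2, neckM_coeff, if_pos (by omega : (n - 2) % 2 = 1),
          if_neg h1]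
        have he : (n + 1) / 2 = (n - 2 + 1) / 2 + 1 := by omega
        rw [he, pow_succ]
        ring
    · rw [if_neg h, if_neg (by omega : n ≠ 1)]
      by_cases h2 : 2 ≤ n
      · rw [if_pos h2, neckM_coeff, if_neg (by omega : ¬ (n - 2) % 2 = 1)]
        ring
      · rw [if_neg h2]
        ring
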